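/- If i ≥ 0 and j, n ≥ 1 are integers, q is an odd prime, (q-1) does not divide n, and q^i divides n, then S_n(q^j) = ∑_{k=1}^{q^j} k^n ≡ 0 (mod q^(i+j)). -/

import Mathlib

def S (n m : ℕ) : ℕ := ∑ i ∈ Finset.Icc 1 m, i ^ n

open Finset

/-- Core lifting-the-exponent step over `ℤ`. -/
lemma step_pow (q : ℕ) (hq : q.Prime) (s : ℕ) (hs : 1 ≤ s) (a b : ℤ)
    (h : (q : ℤ) ^ s ∣ a - b) : (q : ℤ) ^ (s + 1) ∣ a ^ q - b ^ q := by
  have h1 : (q : ℤ) ∣ a - b := by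
    calc (q : ℤ) = (q : ℤ) ^ 1 := (pow_one _).symm
    _ ∣ (q : ℤ) ^ s := pow_dvd_pow _ hs
    _ ∣ a - b := h
  have key : (q : ℤ) ∣ ∑ t ∈ range q, a ^ t * b ^ (q - 1 - t) := by
    rw [← ZMod.intCast_zmod_eq_zero_iff_dvd]
    have hab : ((a : ZMod q)) = (b : ZMod q) := by
      have h2 := (ZMod.intCast_zmod_eq_zero_iff_dvd (a - b) q).mpr h1
      push_cast at h2
      exact sub_eq_zero.mp h2
    push_cast
    rw [hab]
    have h3 : ∀ t ∈ range q, (b : ZMod q) ^ t * (b : ZMod q) ^ (q - 1 - t)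
        = (b : ZMod q) ^ (q - 1) := by
      intro t ht
      rw [Finset.mem_range] at ht
      rw [← pow_add]
      congr 1
      omega
    rw [Finset.sum_congr rfl h3, Finset.sum_const, Finset.card_range, nsmul_eq_mul,
      ZMod.natCast_self, zero_mul]
  have hfact : a ^ q - b ^ q = (∑ t ∈ range q, a ^ t * b ^ (q - 1 - t)) * (a - b) :=
    (geom_sum₂_mul a b q).symm
  rw [hfact, pow_succ']
  exact mul_dvd_mul key h

/-- `a ≡ b [MOD q^s]` implies `a^(q^i) ≡ b^(q^i) [MOD q^(i+s)]`. -/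
lemma powA (q : ℕ) (hq : q.Prime) (s : ℕ) (hs : 1 ≤ s) (i a b : ℕ)
    (h : a ≡ b [MOD q ^ s]) : a ^ q ^ i ≡ b ^ q ^ i [MOD q ^ (i + s)] := by
  induction i with
  | zero => simpa using h
  | succ k ih =>
    rw [Nat.modEq_iff_dvd] at ih ⊢
    push_cast at ih ⊢
    have hstep := step_pow q hq (k + s) (by omega) _ _ ih
    have e1 : k + 1 + s = k + s + 1 := by omega
    rw [e1, pow_succ q k, pow_mul, pow_mul]
    exact hstep

/-- `a ≡ b [MOD q^s]` and `q^i ∣ n` imply `a^n ≡ b^n [MOD q^(i+s)]`. -/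
lemma powA' (q i s n a b : ℕ) (hq : q.Prime) (hs : 1 ≤ s) (hdvd : q ^ i ∣ n)
    (h : a ≡ b [MOD q ^ s]) : a ^ n ≡ b ^ n [MOD q ^ (i + s)] := by
  obtain ⟨m, rfl⟩ := hdvd
  rw [pow_mul, pow_mul]
  exact (powA q hq s hs i a b h).pow m

theorem stmt6 (i j n q : ℕ) (hj : 1 ≤ j) (hn : 1 ≤ n) (hq : q.Prime) (hodd : Odd q)
    (hnd : ¬ (q - 1 ∣ n)) (hdvd : q ^ i ∣ n) :
    S n (q ^ j) ≡ 0 [MOD q ^ (i + j)] := by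
  haveI : Fact q.Prime := ⟨hq⟩
  have hq1 : 1 < q := hq.one_lt
  have hNpos : 0 < q ^ (i + j) := pow_pos hq.pos _
  haveI : NeZero (q ^ (i + j)) := ⟨hNpos.ne'⟩
  haveI : NeZero (q ^ j) := ⟨(pow_pos hq.pos j).ne'⟩
  set N := q ^ (i + j) with hN
  -- basic size facts
  have hniq : q ^ i ≤ n := Nat.le_of_dvd hn hdvd
  have hipow : i < q ^ i := Nat.lt_pow_self hq1
  have hni : i + 1 ≤ n := by omega
  have hijjn : i + j ≤ j * n := by
    have h1 : i ≤ j * i := Nat.le_mul_of_pos_left i hj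
    have h2 : j * (i + 1) ≤ j * n := Nat.mul_le_mul_left j hni
    have h3 : j * (i + 1) = j * i + j := Nat.mul_succ j i
    omega
  -- reduce to a statement in `ZMod N`
  suffices h0 : ((S n (q ^ j) : ℕ) : ZMod N) = 0 by
    exact (Nat.modEq_zero_iff_dvd).mpr ((ZMod.natCast_eq_zero_iff _ _).mp h0)
  -- rewrite the sum over `Icc 1 m` as a sum over `range m` plus the top term
  have hS : S n (q ^ j) = (∑ k ∈ range (q ^ j), k ^ n) + (q ^ j) ^ n := by
    have hIcc : ∀ m : ℕ, (∑ k ∈ Finset.Icc 1 m, k ^ n) = ∑ k ∈ range (m + 1), k ^ n := by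
      intro m
      induction m with
      | zero => simp [zero_pow (by omega : n ≠ 0)]
      | succ m ih =>
          rw [Finset.sum_Icc_succ_top (by omega : 1 ≤ m + 1), ih,
            Finset.sum_range_succ (fun k => k ^ n) (m + 1)]
    rw [S, hIcc, Finset.sum_range_succ]
  rw [hS]
  push_cast
  -- the top term vanishes
  have htop : ((q : ZMod N) ^ j) ^ n = 0 := by
    have : (((q ^ j) ^ n : ℕ) : ZMod N) = 0 := by
      rw [ZMod.natCast_eq_zero_iff, ← pow_mul]
      exact pow_dvd_pow q hijjn
    push_cast at this
    exact this
  rw [htop, add_zero]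
  -- rewrite the range sum as a sum over `ZMod (q^j)`
  have hsum : (∑ k ∈ range (q ^ j), ((k : ZMod N)) ^ n)
      = ∑ x : ZMod (q ^ j), ((x.val : ZMod N)) ^ n := by
    refine Finset.sum_nbij' (fun k => (k : ZMod (q ^ j))) (fun x => x.val) ?_ ?_ ?_ ?_ ?_
    · intro a _; exact Finset.mem_univ _
    · intro x _; rw [Finset.mem_range]; exact ZMod.val_lt x
    · intro a ha; rw [Finset.mem_range] at ha; exact ZMod.val_cast_of_lt ha
    · intro x _; exact ZMod.natCast_rightInverse x
    · intro a ha
      rw [Finset.mem_range] at ha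
      rw [ZMod.val_cast_of_lt ha]
  rw [hsum]
  -- multiplicativity of `x ↦ (x.val^n : ZMod N)`
  have hmul : ∀ x y : ZMod (q ^ j),
      (((x * y).val : ZMod N)) ^ n = ((x.val : ZMod N)) ^ n * ((y.val : ZMod N)) ^ n := by
    intro x y
    have h1 : (x * y).val ≡ x.val * y.val [MOD q ^ j] := by
      rw [ZMod.val_mul]; exact Nat.mod_modEq _ _
    have h2 : ((x * y).val) ^ n ≡ (x.val * y.val) ^ n [MOD q ^ (i + j)] :=
      powA' q i j n _ _ hq hj hdvd h1
    have h3 : ((((x * y).val) ^ n : ℕ) : ZMod N) = (((x.val * y.val) ^ n : ℕ) : ZMod N) :=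
      (ZMod.natCast_eq_natCast_iff _ _ _).mpr h2
    push_cast at h3
    rw [h3, mul_pow]
  -- find a unit whose n-th power is not 1 mod q
  obtain ⟨g, hg⟩ := IsCyclic.exists_generator (α := (ZMod q)ˣ)
  have horder : orderOf g = q - 1 := by
    rw [orderOf_eq_card_of_forall_mem_zpowers hg, Nat.card_eq_fintype_card, ZMod.card_units]
  have hgn : g ^ n ≠ 1 := by
    intro hcon
    exact hnd (horder ▸ orderOf_dvd_of_pow_eq_one hcon)
  set u := ((g : ZMod q)).val with hu
  have hucast : ((u : ℕ) : ZMod q) = (g : ZMod q) := ZMod.natCast_rightInverse _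
  have hun : ((u : ZMod q)) ^ n ≠ 1 := by
    rw [hucast]
    intro hcon
    apply hgn
    ext
    rw [Units.val_pow_eq_pow_val, hcon, Units.val_one]
  have hcopq : Nat.Coprime u q := by
    have hIs : IsUnit ((u : ℕ) : ZMod q) := by rw [hucast]; exact g.isUnit
    exact (ZMod.isUnit_iff_coprime u q).mp hIs
  have hcop : Nat.Coprime u (q ^ j) := hcopq.pow_right j
  set c0 : (ZMod (q ^ j))ˣ := ZMod.unitOfCoprime u hcop with hc0
  -- multiplication by the unit permutes `ZMod (q^j)`
  let e : ZMod (q ^ j) ≃ ZMod (q ^ j) :=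
    { toFun := fun x => (c0 : ZMod (q ^ j)) * x
      invFun := fun x => ((c0⁻¹ : (ZMod (q ^ j))ˣ) : ZMod (q ^ j)) * x
      left_inv := fun x => by simp
      right_inv := fun x => by simp }
  set T := ∑ x : ZMod (q ^ j), ((x.val : ZMod N)) ^ n with hT
  have hperm : (∑ x : ZMod (q ^ j), ((((c0 : ZMod (q ^ j)) * x).val : ZMod N)) ^ n) = T :=
    Fintype.sum_equiv e _ _ (fun x => rfl)
  set C := ((((c0 : ZMod (q ^ j)).val : ZMod N)) ^ n) with hC
  have hCT : C * T = T := by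
    rw [hT, Finset.mul_sum]
    calc (∑ x : ZMod (q ^ j), C * ((x.val : ZMod N)) ^ n)
        = ∑ x : ZMod (q ^ j), ((((c0 : ZMod (q ^ j)) * x).val : ZMod N)) ^ n := by
          refine Finset.sum_congr rfl fun x _ => ?_
          rw [hmul]
      _ = T := hperm
  -- show `C - 1` is a unit in `ZMod N`
  have hc0val : (c0 : ZMod (q ^ j)).val = u % q ^ j := by
    rw [hc0, ZMod.coe_unitOfCoprime, ZMod.val_natCast]
  have hc0q : ((c0 : ZMod (q ^ j)).val : ZMod q) = (u : ZMod q) := by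
    rw [hc0val, ZMod.natCast_eq_natCast_iff]
    exact (Nat.mod_modEq u (q ^ j)).of_dvd (dvd_pow_self q (by omega))
  have hvpos : 1 ≤ (c0 : ZMod (q ^ j)).val ^ n := by
    rcases Nat.eq_zero_or_pos ((c0 : ZMod (q ^ j)).val) with h0 | h0
    · exfalso
      rw [hc0val] at h0
      have hdu : q ∣ u := dvd_trans (dvd_pow_self q (by omega)) (Nat.dvd_of_mod_eq_zero h0)
      have := Nat.Coprime.eq_one_of_dvd hcopq.symm hdu
      omega
    · exact Nat.one_le_pow _ _ h0
  have hndvd2 : ¬ q ∣ ((c0 : ZMod (q ^ j)).val ^ n - 1) := by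
    intro hcon
    have hmodeq : 1 ≡ (c0 : ZMod (q ^ j)).val ^ n [MOD q] :=
      (Nat.modEq_iff_dvd' hvpos).mpr hcon
    have : (((c0 : ZMod (q ^ j)).val ^ n : ℕ) : ZMod q) = ((1 : ℕ) : ZMod q) :=
      (ZMod.natCast_eq_natCast_iff _ _ _).mpr hmodeq.symm
    push_cast at this
    rw [hc0q] at this
    exact hun this
  have hCunit : IsUnit (C - 1) := by
    have hrw : C - 1 = ((((c0 : ZMod (q ^ j)).val ^ n - 1 : ℕ)) : ZMod N) := by
      rw [Nat.cast_sub hvpos, hC]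
      push_cast
      ring
    rw [hrw, ZMod.isUnit_iff_coprime]
    exact (Nat.Coprime.symm ((Nat.Prime.coprime_iff_not_dvd hq).mpr hndvd2)).pow_right _
  -- conclude T = 0
  have hT0 : T = 0 := by
    have h4 : (C - 1) * T = 0 := by rw [sub_mul, one_mul, hCT, sub_self]
    exact (hCunit.mul_right_eq_zero).mp h4
  exact hT0
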